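/- Let s and t be coprime positive integers and n, m integers with 0 < n < s and 0 < m < t. For every τ ∈ ℂ with Im τ > 0 (writing q^x := exp(2πiτx)), Σ_{k∈ℤ} |k| ( q^{(2stk−nt−ms)²/(4st)} − q^{(2stk−nt+ms)²/(4st)} ) = Σ_{k=0}^{∞} Σ_{k′=0}^{∞} ( q^{Δ_{s−n,m,−2k−2k′−1}} − q^{Δ_{s−n,t−m,−2k−2k′−2}} − q^{Δ_{n,m,−2k−2k′−2}} + q^{Δ_{n,t−m,−2k−2k′−3}} ). (Both sides equal η(τ)·ch_q(𝒳_{n,m}^+)^{h=0}, the singlet character of the (s,t)-log VOA; the right-hand side is the expression obtained from the geometric Atiyah–Bott computation.) -/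

import Mathlib

open Complex Finset

/-- `Q τ x = q^x = exp(2πiτx)` for real `x`. -/
noncomputable def Q (τ : ℂ) (x : ℝ) : ℂ := Complex.exp (2 * Real.pi * Complex.I * τ * x)

/-- The conformal weight `Δ_{a,b,k} = (bs - at + stk)²/(4st)`. -/
noncomputable def Δ (s t a b k : ℤ) : ℝ :=
  ((b * s - a * t + s * t * k : ℤ) : ℝ) ^ 2 / (4 * s * t)

lemma norm_Q (τ : ℂ) (x : ℝ) : ‖Q τ x‖ = Real.exp (-(2 * Real.pi * τ.im * x)) := by
  rw [Q, Complex.norm_exp]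
  congr 1
  simp [Complex.mul_re, Complex.mul_im]

lemma summable_geom_aux {ρ : ℝ} (h0 : 0 ≤ ρ) (h1 : ρ < 1) :
    Summable fun j : ℕ => ((j : ℝ) + 1) * ρ ^ j := by
  have h1' : ‖ρ‖ < 1 := by rwa [Real.norm_eq_abs, _root_.abs_of_nonneg h0]
  have h2 := summable_pow_mul_geometric_of_norm_lt_one (R := ℝ) 1 h1'
  simp only [pow_one] at h2
  exact (h2.add (summable_geometric_of_lt_one h0 h1)).congr fun j => by ring

lemma summable_master {a C : ℝ} (ha : 0 < a) {E : ℕ → ℝ} (hE : ∀ j : ℕ, (j : ℝ) - C ≤ E j) :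
    Summable fun j : ℕ => ((j : ℝ) + 1) * Real.exp (-(a * E j)) := by
  have hρ0 : (0:ℝ) ≤ Real.exp (-a) := (Real.exp_pos _).le
  have hρ1 : Real.exp (-a) < 1 := Real.exp_lt_one_iff.mpr (by linarith)
  apply Summable.of_nonneg_of_le (f := fun j : ℕ => Real.exp (a*C) * (((j:ℝ)+1) * Real.exp (-a) ^ j))
  · intro j; positivity
  · intro j
    have h1 : Real.exp (-(a * E j)) ≤ Real.exp (a*C) * Real.exp (-a) ^ j := by
      rw [← Real.exp_nat_mul, ← Real.exp_add]
      apply Real.exp_le_exp.2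
      have := hE j
      nlinarith
    calc ((j:ℝ)+1) * Real.exp (-(a * E j))
        ≤ ((j:ℝ)+1) * (Real.exp (a*C) * Real.exp (-a) ^ j) := by
          apply mul_le_mul_of_nonneg_left h1 (by positivity)
      _ = Real.exp (a*C) * (((j:ℝ)+1) * Real.exp (-a) ^ j) := by ring
  · exact (summable_geom_aux hρ0 hρ1).mul_left _

lemma exponent_lb {s t c k : ℤ} (hs : 0 < s) (ht : 0 < t) (hc : |c| ≤ 2*s*t) {j : ℕ}
    (hk : |k| = (j:ℤ) + 1) :
    (j : ℝ) - (2*(s:ℝ)*t+1)^2 ≤ ((2*s*t*k - c : ℤ) : ℝ)^2 / (4*(s:ℝ)*t) := by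
  have hT : (1:ℝ) ≤ (s:ℝ)*t := by
    have : (1:ℤ) ≤ s*t := by nlinarith
    exact_mod_cast this
  have habs : |(c:ℝ)| ≤ 2*(s:ℝ)*t := by exact_mod_cast hc
  have hc1 := abs_le.mp habs
  have hk2 : ((k:ℝ))^2 = ((j:ℝ)+1)^2 := by
    rw [← _root_.sq_abs]
    congr 1
    exact_mod_cast hk
  have hkc : (k:ℝ) * c ≤ ((j:ℝ)+1) * (2*(s:ℝ)*t) := by
    have hkabs : |(k:ℝ)| = ((j:ℝ)+1) := by exact_mod_cast hk
    calc (k:ℝ) * c ≤ |(k:ℝ) * c| := le_abs_self _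
      _ = |(k:ℝ)| * |(c:ℝ)| := abs_mul _ _
      _ ≤ ((j:ℝ)+1) * (2*(s:ℝ)*t) := by
          rw [hkabs]
          exact mul_le_mul_of_nonneg_left habs (by positivity)
  have h4 : (0:ℝ) < 4*(s:ℝ)*t := by positivity
  rw [le_div_iff₀ h4]
  push_cast
  have hj : (0:ℝ) ≤ (j:ℝ) := Nat.cast_nonneg j
  nlinarith [sq_nonneg ((c:ℝ)), sq_nonneg ((j:ℝ) - 1), sq_nonneg ((j:ℝ)),
    mul_nonneg (mul_nonneg (sub_nonneg.mpr hT) hj) hj, sq_nonneg ((s:ℝ)*t)]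

noncomputable def Gf (s t n m : ℤ) (τ : ℂ) (k : ℤ) : ℂ :=
  Q τ (((2 * s * t * k - n * t - m * s : ℤ) : ℝ) ^ 2 / (4 * s * t))
    - Q τ (((2 * s * t * k - n * t + m * s : ℤ) : ℝ) ^ 2 / (4 * s * t))

lemma Gf_eq (s t n m : ℤ) (τ : ℂ) (k : ℤ) :
    Gf s t n m τ k
      = Q τ (((2 * s * t * k - n * t - m * s : ℤ) : ℝ) ^ 2 / (4 * s * t))
        - Q τ (((2 * s * t * k - n * t + m * s : ℤ) : ℝ) ^ 2 / (4 * s * t)) := rfl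

noncomputable def Hf (s t n m : ℤ) (τ : ℂ) (j : ℕ) : ℂ :=
  Gf s t n m τ ((j : ℤ) + 1) + Gf s t n m τ (-((j : ℤ) + 1))

lemma summable_norm_Gf (s t n m : ℤ) (hs : 0 < s) (ht : 0 < t)
    (hn : 0 < n) (hns : n < s) (hm : 0 < m) (hmt : m < t)
    (τ : ℂ) (hτ : 0 < τ.im) (ε : ℤ) (hε : ε = 1 ∨ ε = -1) :
    Summable fun j : ℕ => ((j : ℝ) + 1) * ‖Gf s t n m τ (ε * ((j : ℤ) + 1))‖ := by
  have ha : 0 < 2 * Real.pi * τ.im := mul_pos (mul_pos two_pos Real.pi_pos) hτ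
  have hkabs : ∀ j : ℕ, |ε * ((j : ℤ) + 1)| = (j : ℤ) + 1 := by
    intro j
    rcases hε with rfl | rfl
    · rw [one_mul]; exact _root_.abs_of_nonneg (by positivity)
    · rw [neg_one_mul, abs_neg]; exact _root_.abs_of_nonneg (by positivity)
  have hc1 : |n * t + m * s| ≤ 2 * s * t := by
    rw [abs_le]; constructor <;> nlinarith
  have hc2 : |n * t - m * s| ≤ 2 * s * t := by
    rw [abs_le]; constructor <;> nlinarith
  have hE1 : ∀ j : ℕ, (j : ℝ) - (2 * (s:ℝ) * t + 1) ^ 2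
      ≤ ((2 * s * t * (ε * ((j : ℤ) + 1)) - n * t - m * s : ℤ) : ℝ) ^ 2 / (4 * (s:ℝ) * t) := by
    intro j
    have e : (2 * s * t * (ε * ((j : ℤ) + 1)) - (n * t + m * s) : ℤ)
        = (2 * s * t * (ε * ((j : ℤ) + 1)) - n * t - m * s : ℤ) := by ring
    have := exponent_lb hs ht hc1 (hkabs j)
    rwa [e] at this
  have hE2 : ∀ j : ℕ, (j : ℝ) - (2 * (s:ℝ) * t + 1) ^ 2
      ≤ ((2 * s * t * (ε * ((j : ℤ) + 1)) - n * t + m * s : ℤ) : ℝ) ^ 2 / (4 * (s:ℝ) * t) := by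
    intro j
    have e : (2 * s * t * (ε * ((j : ℤ) + 1)) - (n * t - m * s) : ℤ)
        = (2 * s * t * (ε * ((j : ℤ) + 1)) - n * t + m * s : ℤ) := by ring
    have := exponent_lb hs ht hc2 (hkabs j)
    rwa [e] at this
  apply Summable.of_nonneg_of_le
    (f := fun j : ℕ =>
      ((j : ℝ) + 1) * Real.exp (-(2 * Real.pi * τ.im *
        (((2 * s * t * (ε * ((j : ℤ) + 1)) - n * t - m * s : ℤ) : ℝ) ^ 2 / (4 * (s:ℝ) * t))))
      + ((j : ℝ) + 1) * Real.exp (-(2 * Real.pi * τ.im *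
        (((2 * s * t * (ε * ((j : ℤ) + 1)) - n * t + m * s : ℤ) : ℝ) ^ 2 / (4 * (s:ℝ) * t)))))
  · intro j; positivity
  · intro j
    have hb : ‖Gf s t n m τ (ε * ((j : ℤ) + 1))‖
        ≤ Real.exp (-(2 * Real.pi * τ.im *
            (((2 * s * t * (ε * ((j : ℤ) + 1)) - n * t - m * s : ℤ) : ℝ) ^ 2 / (4 * (s:ℝ) * t))))
          + Real.exp (-(2 * Real.pi * τ.im *
            (((2 * s * t * (ε * ((j : ℤ) + 1)) - n * t + m * s : ℤ) : ℝ) ^ 2 / (4 * (s:ℝ) * t)))) := by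
      rw [Gf_eq]
      refine (norm_sub_le _ _).trans ?_
      rw [norm_Q, norm_Q]
    calc ((j : ℝ) + 1) * ‖Gf s t n m τ (ε * ((j : ℤ) + 1))‖
        ≤ ((j : ℝ) + 1) * (Real.exp (-(2 * Real.pi * τ.im *
            (((2 * s * t * (ε * ((j : ℤ) + 1)) - n * t - m * s : ℤ) : ℝ) ^ 2 / (4 * (s:ℝ) * t))))
          + Real.exp (-(2 * Real.pi * τ.im *
            (((2 * s * t * (ε * ((j : ℤ) + 1)) - n * t + m * s : ℤ) : ℝ) ^ 2 / (4 * (s:ℝ) * t))))) :=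
          mul_le_mul_of_nonneg_left hb (by positivity)
      _ = _ := by ring
  · exact (summable_master ha hE1).add (summable_master ha hE2)


theorem statement17 (s t n m : ℤ) (hs : 0 < s) (ht : 0 < t) (hst : IsCoprime s t)
    (hn : 0 < n) (hns : n < s) (hm : 0 < m) (hmt : m < t)
    (τ : ℂ) (hτ : 0 < τ.im) :
    ∑' k : ℤ, ((|k| : ℤ) : ℂ) *
        (Q τ (((2 * s * t * k - n * t - m * s : ℤ) : ℝ) ^ 2 / (4 * s * t))
          - Q τ (((2 * s * t * k - n * t + m * s : ℤ) : ℝ) ^ 2 / (4 * s * t))) =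
      ∑' k : ℕ, ∑' k' : ℕ,
        (Q τ (Δ s t (s - n) m (-(2 * (k : ℤ)) - 2 * (k' : ℤ) - 1))
          - Q τ (Δ s t (s - n) (t - m) (-(2 * (k : ℤ)) - 2 * (k' : ℤ) - 2))
          - Q τ (Δ s t n m (-(2 * (k : ℤ)) - 2 * (k' : ℤ) - 2))
          + Q τ (Δ s t n (t - m) (-(2 * (k : ℤ)) - 2 * (k' : ℤ) - 3))) := by
  classical
  -- basic summability facts
  have hpos : Summable fun j : ℕ => ((j : ℝ) + 1) * ‖Gf s t n m τ ((j : ℤ) + 1)‖ := by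
    simpa using summable_norm_Gf s t n m hs ht hn hns hm hmt τ hτ 1 (Or.inl rfl)
  have hneg : Summable fun j : ℕ => ((j : ℝ) + 1) * ‖Gf s t n m τ (-((j : ℤ) + 1))‖ := by
    simpa using summable_norm_Gf s t n m hs ht hn hns hm hmt τ hτ (-1) (Or.inr rfl)
  have hnormcoef : ∀ j : ℕ, ‖((((j : ℤ) + 1) : ℤ) : ℂ)‖ = (j : ℝ) + 1 := by
    intro j
    rw [Complex.norm_intCast]
    push_cast
    exact _root_.abs_of_nonneg (by positivity)
  have hposC : Summable fun j : ℕ => ((((j : ℤ) + 1) : ℤ) : ℂ) * Gf s t n m τ ((j : ℤ) + 1) := by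
    apply Summable.of_norm
    refine hpos.congr fun j => ?_
    rw [norm_mul, hnormcoef]
  have hnegC : Summable fun j : ℕ => ((((j : ℤ) + 1) : ℤ) : ℂ) * Gf s t n m τ (-((j : ℤ) + 1)) := by
    apply Summable.of_norm
    refine hneg.congr fun j => ?_
    rw [norm_mul, hnormcoef]
  -- rewrite the left-hand side in terms of Gf
  simp only [← Gf_eq]
  -- rewrite the right-hand summand in terms of Hf
  have hsummand : ∀ k k' : ℕ,
      (Q τ (Δ s t (s - n) m (-(2 * (k : ℤ)) - 2 * (k' : ℤ) - 1))
        - Q τ (Δ s t (s - n) (t - m) (-(2 * (k : ℤ)) - 2 * (k' : ℤ) - 2))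
        - Q τ (Δ s t n m (-(2 * (k : ℤ)) - 2 * (k' : ℤ) - 2))
        + Q τ (Δ s t n (t - m) (-(2 * (k : ℤ)) - 2 * (k' : ℤ) - 3)))
      = Hf s t n m τ (k + k') := by
    intro k k'
    have e1 : Δ s t (s - n) m (-(2 * (k : ℤ)) - 2 * (k' : ℤ) - 1)
        = ((2 * s * t * (((k + k' : ℕ) : ℤ) + 1) - n * t - m * s : ℤ) : ℝ) ^ 2 / (4 * s * t) := by
      unfold Δ; push_cast; ring
    have e2 : Δ s t (s - n) (t - m) (-(2 * (k : ℤ)) - 2 * (k' : ℤ) - 2)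
        = ((2 * s * t * (((k + k' : ℕ) : ℤ) + 1) - n * t + m * s : ℤ) : ℝ) ^ 2 / (4 * s * t) := by
      unfold Δ; push_cast; ring
    have e3 : Δ s t n m (-(2 * (k : ℤ)) - 2 * (k' : ℤ) - 2)
        = ((2 * s * t * (-(((k + k' : ℕ) : ℤ) + 1)) - n * t + m * s : ℤ) : ℝ) ^ 2 / (4 * s * t) := by
      unfold Δ; push_cast; ring
    have e4 : Δ s t n (t - m) (-(2 * (k : ℤ)) - 2 * (k' : ℤ) - 3)
        = ((2 * s * t * (-(((k + k' : ℕ) : ℤ) + 1)) - n * t - m * s : ℤ) : ℝ) ^ 2 / (4 * s * t) := by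
      unfold Δ; push_cast; ring
    rw [e1, e2, e3, e4]
    simp only [Hf, Gf_eq]
    ring
  have hrw : (∑' k : ℕ, ∑' k' : ℕ,
      (Q τ (Δ s t (s - n) m (-(2 * (k : ℤ)) - 2 * (k' : ℤ) - 1))
        - Q τ (Δ s t (s - n) (t - m) (-(2 * (k : ℤ)) - 2 * (k' : ℤ) - 2))
        - Q τ (Δ s t n m (-(2 * (k : ℤ)) - 2 * (k' : ℤ) - 2))
        + Q τ (Δ s t n (t - m) (-(2 * (k : ℤ)) - 2 * (k' : ℤ) - 3))))
      = ∑' k : ℕ, ∑' k' : ℕ, Hf s t n m τ (k + k') :=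
    tsum_congr fun k => tsum_congr fun k' => hsummand k k'
  rw [hrw]
  -- the middle quantity
  set S : ℂ := ∑' j : ℕ, (((j + 1 : ℕ)) : ℂ) * Hf s t n m τ j with hS
  -- summability of (j+1) * ‖Hf j‖
  have hHnorm : Summable fun j : ℕ => ((j : ℝ) + 1) * ‖Hf s t n m τ j‖ := by
    apply Summable.of_nonneg_of_le
      (f := fun j : ℕ => ((j : ℝ) + 1) * ‖Gf s t n m τ ((j : ℤ) + 1)‖
        + ((j : ℝ) + 1) * ‖Gf s t n m τ (-((j : ℤ) + 1))‖)
    · intro j; positivity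
    · intro j
      calc ((j : ℝ) + 1) * ‖Hf s t n m τ j‖
          ≤ ((j : ℝ) + 1) * (‖Gf s t n m τ ((j : ℤ) + 1)‖ + ‖Gf s t n m τ (-((j : ℤ) + 1))‖) :=
            mul_le_mul_of_nonneg_left (norm_add_le _ _) (by positivity)
        _ = _ := by ring
    · exact hpos.add hneg
  -- LHS = S
  have hLHS : (∑' k : ℤ, ((|k| : ℤ) : ℂ) * Gf s t n m τ k) = S := by
    have h₁ : Summable fun j : ℕ => ((|(j : ℤ)| : ℤ) : ℂ) * Gf s t n m τ (j : ℤ) := by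
      apply (summable_nat_add_iff 1).mp
      refine hposC.congr fun j => ?_
      have : |((j + 1 : ℕ) : ℤ)| = (j : ℤ) + 1 := by
        push_cast; exact _root_.abs_of_nonneg (by positivity)
      rw [this]
      push_cast
      ring_nf
    have h₂ : Summable fun j : ℕ => ((|(-((j : ℤ) + 1))| : ℤ) : ℂ) * Gf s t n m τ (-((j : ℤ) + 1)) := by
      refine hnegC.congr fun j => ?_
      have : |(-((j : ℤ) + 1))| = (j : ℤ) + 1 := by
        rw [abs_neg]; exact _root_.abs_of_nonneg (by positivity)
      rw [this]
    have hsplit := tsum_of_nat_of_neg_add_one (f := fun k : ℤ => ((|k| : ℤ) : ℂ) * Gf s t n m τ k)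
      h₁ h₂
    rw [hsplit]
    have hzero := Summable.tsum_eq_zero_add (f := fun j : ℕ => ((|(j : ℤ)| : ℤ) : ℂ) * Gf s t n m τ (j : ℤ)) h₁
    rw [hzero]
    simp only [Nat.cast_zero, abs_zero, Int.cast_zero, zero_mul, zero_add]
    have hn1 : (∑' j : ℕ, ((|((j + 1 : ℕ) : ℤ)| : ℤ) : ℂ) * Gf s t n m τ ((j + 1 : ℕ) : ℤ))
        = ∑' j : ℕ, ((((j : ℤ) + 1) : ℤ) : ℂ) * Gf s t n m τ ((j : ℤ) + 1) := by
      refine tsum_congr fun j => ?_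
      have : |((j + 1 : ℕ) : ℤ)| = (j : ℤ) + 1 := by
        push_cast; exact _root_.abs_of_nonneg (by positivity)
      rw [this]
      push_cast
      ring_nf
    have hn2 : (∑' j : ℕ, ((|(-((j : ℤ) + 1))| : ℤ) : ℂ) * Gf s t n m τ (-((j : ℤ) + 1)))
        = ∑' j : ℕ, ((((j : ℤ) + 1) : ℤ) : ℂ) * Gf s t n m τ (-((j : ℤ) + 1)) := by
      refine tsum_congr fun j => ?_
      have : |(-((j : ℤ) + 1))| = (j : ℤ) + 1 := by
        rw [abs_neg]; exact _root_.abs_of_nonneg (by positivity)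
      rw [this]
    rw [hn1, hn2, ← Summable.tsum_add hposC hnegC, hS]
    refine tsum_congr fun j => ?_
    simp only [Hf]
    push_cast
    ring
  -- RHS = S
  have hRHS : (∑' k : ℕ, ∑' k' : ℕ, Hf s t n m τ (k + k')) = S := by
    -- summability over the sigma type of antidiagonals
    have hfiber : ∀ nn : ℕ, (∑' _i : (antidiagonal nn : Finset (ℕ × ℕ)), ‖Hf s t n m τ nn‖)
        = ((nn : ℝ) + 1) * ‖Hf s t n m τ nn‖ := by
      intro nn
      rw [tsum_fintype]
      rw [Finset.sum_const, Finset.card_univ, Fintype.card_coe, Nat.card_antidiagonal, nsmul_eq_mul]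
      push_cast
      ring
    have hsigR : Summable fun x : Σ nn : ℕ, (antidiagonal nn : Finset (ℕ × ℕ)) =>
        ‖Hf s t n m τ x.1‖ := by
      refine (summable_sigma_of_nonneg fun _ => norm_nonneg _).mpr
        ⟨fun nn => (hasSum_fintype _).summable, ?_⟩
      refine hHnorm.congr fun nn => ?_
      exact (hfiber nn).symm
    have hsigC : Summable fun x : Σ nn : ℕ, (antidiagonal nn : Finset (ℕ × ℕ)) =>
        Hf s t n m τ x.1 := Summable.of_norm hsigR
    have hcomp : ((fun p : ℕ × ℕ => Hf s t n m τ (p.1 + p.2)) ∘ Finset.HasAntidiagonal.sigmaAntidiagonalEquivProd)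
        = fun x : Σ nn : ℕ, (antidiagonal nn : Finset (ℕ × ℕ)) => Hf s t n m τ x.1 := by
      funext x
      obtain ⟨nn, ⟨⟨k, l⟩, hmem⟩⟩ := x
      rw [Finset.HasAntidiagonal.mem_antidiagonal] at hmem
      simp [Function.comp, Finset.HasAntidiagonal.sigmaAntidiagonalEquivProd, hmem]
    have hprodsum : Summable fun p : ℕ × ℕ => Hf s t n m τ (p.1 + p.2) := by
      refine (Equiv.summable_iff Finset.HasAntidiagonal.sigmaAntidiagonalEquivProd).mp ?_
      rw [hcomp]
      exact hsigC
    have step1 : (∑' k : ℕ, ∑' k' : ℕ, Hf s t n m τ (k + k'))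
        = ∑' p : ℕ × ℕ, Hf s t n m τ (p.1 + p.2) := by
      refine (Summable.tsum_prod' hprodsum fun k => ?_).symm
      exact hprodsum.comp_injective fun a b hab => (Prod.ext_iff.1 hab).2
    have step2 : (∑' p : ℕ × ℕ, Hf s t n m τ (p.1 + p.2))
        = ∑' x : Σ nn : ℕ, (antidiagonal nn : Finset (ℕ × ℕ)), Hf s t n m τ x.1 := by
      rw [← Equiv.tsum_eq Finset.HasAntidiagonal.sigmaAntidiagonalEquivProd
        (fun p : ℕ × ℕ => Hf s t n m τ (p.1 + p.2))]
      exact tsum_congr fun x => congrFun hcomp x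
    have step3 : (∑' x : Σ nn : ℕ, (antidiagonal nn : Finset (ℕ × ℕ)), Hf s t n m τ x.1)
        = ∑' nn : ℕ, ∑' _i : (antidiagonal nn : Finset (ℕ × ℕ)), Hf s t n m τ nn :=
      Summable.tsum_sigma' (fun nn => (hasSum_fintype _).summable) hsigC
    have step4 : (∑' nn : ℕ, ∑' _i : (antidiagonal nn : Finset (ℕ × ℕ)), Hf s t n m τ nn) = S := by
      refine tsum_congr fun nn => ?_
      rw [tsum_fintype, Finset.sum_const, Finset.card_univ, Fintype.card_coe, Nat.card_antidiagonal, nsmul_eq_mul]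
    rw [step1, step2, step3, step4]
  rw [hLHS, hRHS]
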